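/- Let A, B be nonempty closed convex subsets of a uniformly convex Banach space X. Suppose {(x_n, y_n)} and {(w_n, z_n)} are sequences in A × B and {(u_n, v_n)} is a sequence in B × A such that ‖(x_n, y_n) − (u_n, v_n)‖ → dist(A,B) and ‖(w_n, z_n) − (u_n, v_n)‖ → dist(A,B). Then ‖(x_n, y_n) − (w_n, z_n)‖ → 0. -/
import Mathlib


open Filter Topology

/-- `setDist A B = inf {‖a - b‖ : a ∈ A, b ∈ B}`. -/
noncomputable def setDist {X : Type*} [NormedAddCommGroup X] (A B : Set X) : ℝ :=
  sInf {d : ℝ | ∃ a ∈ A, ∃ b ∈ B, d = ‖a - b‖}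

lemma key_uc {X : Type*} [NormedAddCommGroup X] [NormedSpace ℝ X] [UniformConvexSpace X]
    {d : ℝ} (hd : 0 ≤ d) {a b : ℕ → X}
    (ha : Tendsto (fun n => ‖a n‖) atTop (𝓝 d))
    (hb : Tendsto (fun n => ‖b n‖) atTop (𝓝 d))
    (hab : ∀ n, 2 * d ≤ ‖a n + b n‖) :
    Tendsto (fun n => ‖a n - b n‖) atTop (𝓝 0) := by
  rcases hd.eq_or_lt with rfl | hd
  · have h0 : Tendsto (fun n => ‖a n‖ + ‖b n‖) atTop (𝓝 0) := by
      simpa using ha.add hb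
    exact squeeze_zero (fun n => norm_nonneg _) (fun n => norm_sub_le _ _) h0
  · rw [Metric.tendsto_atTop]
    intro ε hε
    obtain ⟨δ, hδ, hball⟩ :=
      exists_forall_closed_ball_dist_add_le_two_sub X (ε := ε / (2 * d))
        (div_pos hε (by linarith))
    set η : ℝ := min d (δ * d / 4) with hη
    have hηpos : 0 < η := lt_min hd (by positivity)
    have haev : ∀ᶠ n in atTop, ‖a n‖ ≤ d + η := by
      filter_upwards [ha.eventually (eventually_le_nhds (by linarith : d < d + η))] with n h
      exact h
    have hbev : ∀ᶠ n in atTop, ‖b n‖ ≤ d + η := by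
      filter_upwards [hb.eventually (eventually_le_nhds (by linarith : d < d + η))] with n h
      exact h
    obtain ⟨N, hN⟩ := (haev.and hbev).exists_forall_of_atTop
    refine ⟨N, fun n hn => ?_⟩
    obtain ⟨ha', hb'⟩ := hN n hn
    rw [Real.dist_eq, sub_zero, abs_of_nonneg (norm_nonneg _)]
    by_contra hcon
    push_neg at hcon
    have hηd : η ≤ d := min_le_left _ _
    have hη4 : η ≤ δ * d / 4 := min_le_right _ _
    set r : ℝ := d + η with hr
    have hrpos : 0 < r := by positivity
    have hx1 : ‖r⁻¹ • a n‖ ≤ 1 := by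
      rw [norm_smul, norm_inv, Real.norm_of_nonneg hrpos.le]
      rw [inv_mul_le_iff₀ hrpos, mul_one]; exact ha'
    have hy1 : ‖r⁻¹ • b n‖ ≤ 1 := by
      rw [norm_smul, norm_inv, Real.norm_of_nonneg hrpos.le]
      rw [inv_mul_le_iff₀ hrpos, mul_one]; exact hb'
    have hsub : ε / (2 * d) ≤ ‖r⁻¹ • a n - r⁻¹ • b n‖ := by
      rw [← smul_sub, norm_smul, norm_inv, Real.norm_of_nonneg hrpos.le]
      rw [div_le_iff₀ (by linarith), inv_mul_eq_div, div_mul_eq_mul_div,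
        le_div_iff₀ hrpos]
      have h1 : ε * r ≤ ε * (2 * d) := by
        apply mul_le_mul_of_nonneg_left _ hε.le
        simp only [hr]; linarith
      nlinarith [norm_nonneg (a n - b n)]
    have hsum := hball hx1 hy1 hsub
    rw [← smul_add, norm_smul, norm_inv, Real.norm_of_nonneg hrpos.le] at hsum
    have h2d : 2 * d ≤ ‖a n + b n‖ := hab n
    have hle : 2 * d ≤ (2 - δ) * r := by
      have := hsum
      rw [inv_mul_le_iff₀ hrpos] at this
      linarith
    have hexp : (2 - δ) * r = 2 * d + 2 * η - δ * d - δ * η := by ring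
    nlinarith

theorem stmt9 {X : Type*} [NormedAddCommGroup X] [NormedSpace ℝ X]
    [UniformConvexSpace X] [CompleteSpace X]
    (A B : Set X) (hA : A.Nonempty) (hB : B.Nonempty)
    (hAcl : IsClosed A) (hBcl : IsClosed B) (hAconv : Convex ℝ A) (hBconv : Convex ℝ B)
    (x y w z u v : ℕ → X)
    (hxy : ∀ n, x n ∈ A ∧ y n ∈ B) (hwz : ∀ n, w n ∈ A ∧ z n ∈ B)
    (huv : ∀ n, u n ∈ B ∧ v n ∈ A)
    (h1 : Tendsto (fun n => ‖((x n, y n) : X × X) - (u n, v n)‖) atTop (𝓝 (setDist A B)))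
    (h2 : Tendsto (fun n => ‖((w n, z n) : X × X) - (u n, v n)‖) atTop (𝓝 (setDist A B))) :
    Tendsto (fun n => ‖((x n, y n) : X × X) - (w n, z n)‖) atTop (𝓝 0) := by
  set d := setDist A B with hdDef
  have hbdd : BddBelow {t : ℝ | ∃ a ∈ A, ∃ b ∈ B, t = ‖a - b‖} :=
    ⟨0, fun t ⟨a, _, b, _, ht⟩ => ht ▸ norm_nonneg _⟩
  have hlb : ∀ a ∈ A, ∀ b ∈ B, d ≤ ‖a - b‖ := fun a ha b hb =>
    csInf_le hbdd ⟨a, ha, b, hb, rfl⟩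
  have hd0 : 0 ≤ d := by
    obtain ⟨a, ha⟩ := hA; obtain ⟨b, hb⟩ := hB
    exact Real.sInf_nonneg (fun t ⟨a, _, b, _, ht⟩ => ht ▸ norm_nonneg _)
  -- componentwise convergence
  have hnorm : ∀ (p q : X × X), ‖p - q‖ = max ‖p.1 - q.1‖ ‖p.2 - q.2‖ := by
    intro p q; rfl
  have hxu : Tendsto (fun n => ‖x n - u n‖) atTop (𝓝 d) := by
    refine tendsto_of_tendsto_of_tendsto_of_le_of_le tendsto_const_nhds h1
      (fun n => hlb _ (hxy n).1 _ (huv n).1) (fun n => ?_)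
    rw [hnorm]; exact le_max_left _ _
  have hyv : Tendsto (fun n => ‖y n - v n‖) atTop (𝓝 d) := by
    refine tendsto_of_tendsto_of_tendsto_of_le_of_le tendsto_const_nhds h1
      (fun n => ?_) (fun n => ?_)
    · rw [← norm_neg, neg_sub]; exact hlb _ (huv n).2 _ (hxy n).2
    · rw [hnorm]; exact le_max_right _ _
  have hwu : Tendsto (fun n => ‖w n - u n‖) atTop (𝓝 d) := by
    refine tendsto_of_tendsto_of_tendsto_of_le_of_le tendsto_const_nhds h2
      (fun n => hlb _ (hwz n).1 _ (huv n).1) (fun n => ?_)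
    rw [hnorm]; exact le_max_left _ _
  have hzv : Tendsto (fun n => ‖z n - v n‖) atTop (𝓝 d) := by
    refine tendsto_of_tendsto_of_tendsto_of_le_of_le tendsto_const_nhds h2
      (fun n => ?_) (fun n => ?_)
    · rw [← norm_neg, neg_sub]; exact hlb _ (huv n).2 _ (hwz n).2
    · rw [hnorm]; exact le_max_right _ _
  have hxw : Tendsto (fun n => ‖x n - w n‖) atTop (𝓝 0) := by
    have hmid : ∀ n, 2 * d ≤ ‖(x n - u n) + (w n - u n)‖ := by
      intro n
      have hm : (1/2 : ℝ) • x n + (1/2 : ℝ) • w n ∈ A :=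
        hAconv (hxy n).1 (hwz n).1 (by norm_num) (by norm_num) (by norm_num)
      have := hlb _ hm _ (huv n).1
      have heq : (x n - u n) + (w n - u n) =
          (2 : ℝ) • ((1/2 : ℝ) • x n + (1/2 : ℝ) • w n - u n) := by
        rw [smul_sub, smul_add, smul_smul, smul_smul]; norm_num
        module
      rw [heq, norm_smul]
      simp only [Real.norm_ofNat]
      linarith
    have := key_uc hd0 hxu hwu hmid
    simpa using this
  have hyz : Tendsto (fun n => ‖y n - z n‖) atTop (𝓝 0) := by
    have hmid : ∀ n, 2 * d ≤ ‖(y n - v n) + (z n - v n)‖ := by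
      intro n
      have hm : (1/2 : ℝ) • y n + (1/2 : ℝ) • z n ∈ B :=
        hBconv (hxy n).2 (hwz n).2 (by norm_num) (by norm_num) (by norm_num)
      have := hlb _ (huv n).2 _ hm
      have heq : (y n - v n) + (z n - v n) =
          -((2 : ℝ) • (v n - ((1/2 : ℝ) • y n + (1/2 : ℝ) • z n))) := by
        module
      rw [heq, norm_neg, norm_smul]
      simp only [Real.norm_ofNat]
      linarith
    have := key_uc hd0 hyv hzv hmid
    simpa using this
  have h0 : Tendsto (fun n => ‖x n - w n‖ + ‖y n - z n‖) atTop (𝓝 0) := by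
    simpa using hxw.add hyz
  refine squeeze_zero (fun n => norm_nonneg _) (fun n => ?_) h0
  rw [hnorm]
  exact max_le (le_add_of_nonneg_right (norm_nonneg _))
    (le_add_of_nonneg_left (norm_nonneg _))
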